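/- Let H be a k-uniform hypergraph. For integers s ≥ 1 and r ≥ ks, the adjacency matrix of the line multigraph of the power hypergraph H^r_s satisfies A(L(H^r_s)) = s·A(L(H)); consequently its characteristic polynomial satisfies P_{L(H^r_s)}(λ) = s^m P_{L(H)}(λ/s) and E(L(H^r_s)) = s·E(L(H)). -/

import Mathlib

open Matrix BigOperators Finset

/-- Adjacency matrix of the line multigraph of a hypergraph with vertex type `V` and
edges `E : Fin m → Finset V`: the `(e,f)`-entry is `|E e ∩ E f|` for `e ≠ f`, `0` on
the diagonal. -/
noncomputable def lineAdj {V : Type*} [DecidableEq V] {m : ℕ} (E : Fin m → Finset V) :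
    Matrix (Fin m) (Fin m) ℝ :=
  fun e f => if e = f then 0 else ((E e ∩ E f).card : ℝ)

/-- Power hypergraph `H^r_s`: each vertex `v` is replaced by `s` copies and each edge
gets `r - k*s` extra new vertices. Edges are indexed as in `H`. -/
noncomputable def powerEdges {n m : ℕ} (k s r : ℕ) (E : Fin m → Finset (Fin n)) :
    Fin m → Finset ((Fin n × Fin s) ⊕ (Fin m × Fin (r - k * s))) :=
  fun e =>
    ((E e ×ˢ (univ : Finset (Fin s))).map (Function.Embedding.inl)) ∪
      (({e} ×ˢ (univ : Finset (Fin (r - k * s)))).map (Function.Embedding.inr))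

open Polynomial in
lemma eval_charpoly_aux {N : ℕ} (M : Matrix (Fin N) (Fin N) ℝ) (lam : ℝ) :
    M.charpoly.eval lam = (lam • (1 : Matrix (Fin N) (Fin N) ℝ) - M).det := by
  rw [Matrix.charpoly, _root_.eval_det, Matrix.matPolyEquiv_charmatrix]
  simp [Matrix.scalar_apply, Matrix.smul_one_eq_diagonal]

lemma det_smul_one_sub {N : ℕ} {M : Matrix (Fin N) (Fin N) ℝ} (hM : M.IsHermitian)
    (lam : ℝ) :
    (lam • (1 : Matrix (Fin N) (Fin N) ℝ) - M).det = ∏ i, (lam - hM.eigenvalues i) := by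
  set U := (hM.eigenvectorUnitary : Matrix (Fin N) (Fin N) ℝ) with hUdef
  have hU : U * star U = 1 := Matrix.mem_unitaryGroup_iff.mp hM.eigenvectorUnitary.2
  have hA : M = U * Matrix.diagonal hM.eigenvalues * star U := by
    have := hM.spectral_theorem
    rwa [RCLike.ofReal_real_eq_id, Function.id_comp] at this
  have key : lam • (1 : Matrix (Fin N) (Fin N) ℝ) - M
      = U * ((lam • (1 : Matrix (Fin N) (Fin N) ℝ)) - Matrix.diagonal hM.eigenvalues)
        * star U := by
    rw [Matrix.mul_sub, Matrix.sub_mul, mul_smul_comm, Matrix.mul_one, smul_mul_assoc,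
      hU, ← hA]
  rw [key, Matrix.det_mul, Matrix.det_mul]
  have hdet : M.det ≠ 0 ∨ True := Or.inr trivial
  have h1 : U.det * (star U).det = 1 := by
    rw [← Matrix.det_mul, hU, Matrix.det_one]
  calc U.det * ((lam • (1 : Matrix (Fin N) (Fin N) ℝ))
        - Matrix.diagonal hM.eigenvalues).det * (star U).det
      = ((lam • (1 : Matrix (Fin N) (Fin N) ℝ)) - Matrix.diagonal hM.eigenvalues).det
        * (U.det * (star U).det) := by ring
    _ = ((lam • (1 : Matrix (Fin N) (Fin N) ℝ)) - Matrix.diagonal hM.eigenvalues).det := by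
        rw [h1, mul_one]
    _ = ∏ i, (lam - hM.eigenvalues i) := by
        rw [Matrix.smul_one_eq_diagonal, Matrix.diagonal_sub, Matrix.det_diagonal]

open Polynomial in
lemma eigenvalues_multiset_eq {N : ℕ} {A B : Matrix (Fin N) (Fin N) ℝ}
    (hA : A.IsHermitian) (hB : B.IsHermitian) (c : ℝ) (hc : c ≠ 0)
    (hAB : A = c • B) :
    (univ.val.map hA.eigenvalues) = (univ.val.map fun i => c * hB.eigenvalues i) := by
  have heval : ∀ lam : ℝ, ∏ i, (lam - hA.eigenvalues i)
      = ∏ i, (lam - c * hB.eigenvalues i) := by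
    intro lam
    have h1 : (lam • (1 : Matrix (Fin N) (Fin N) ℝ) - A).det
        = ∏ i, (lam - hA.eigenvalues i) := det_smul_one_sub hA lam
    have h2 : lam • (1 : Matrix (Fin N) (Fin N) ℝ) - A
        = c • ((lam / c) • (1 : Matrix (Fin N) (Fin N) ℝ) - B) := by
      rw [hAB, smul_sub, smul_smul, mul_div_cancel₀ _ hc]
    rw [h2, Matrix.det_smul, det_smul_one_sub hB, Fintype.card_fin] at h1
    rw [← h1]
    calc c ^ N * ∏ i, (lam / c - hB.eigenvalues i)
        = ∏ i, (c * (lam / c - hB.eigenvalues i)) := by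
          rw [Finset.prod_mul_distrib, Finset.prod_const, Finset.card_univ, Fintype.card_fin]
      _ = ∏ i, (lam - c * hB.eigenvalues i) := by
          apply Finset.prod_congr rfl
          intro i _
          rw [mul_sub, mul_div_cancel₀ _ hc]
  have hpoly : ((univ.val.map hA.eigenvalues).map fun a => X - C a).prod
      = ((univ.val.map fun i => c * hB.eigenvalues i).map fun a => X - C a).prod := by
    apply Polynomial.funext
    intro lam
    simp only [Multiset.map_map, Function.comp]
    rw [Polynomial.eval_multiset_prod, Polynomial.eval_multiset_prod]
    simp only [Multiset.map_map, Function.comp]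
    have : ∀ (f : Fin N → ℝ), (Multiset.map (fun i => Polynomial.eval lam (X - C (f i)))
        univ.val).prod = ∏ i, (lam - f i) := by
      intro f
      simp [Finset.prod]
    rw [this, this]
    exact heval lam
  have := congrArg Polynomial.roots hpoly
  rwa [Polynomial.roots_multiset_prod_X_sub_C, Polynomial.roots_multiset_prod_X_sub_C] at this

/-- `A(L(H^r_s)) = s • A(L(H))`, hence
`P_{L(H^r_s)}(λ) = s^m P_{L(H)}(λ/s)` and `E(L(H^r_s)) = s E(L(H))`. -/
theorem stmt18 {n m k s r : ℕ} (E : Fin m → Finset (Fin n))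
    (hk2 : 2 ≤ k) (hk : ∀ e, (E e).card = k) (hs : 1 ≤ s) (hr : k * s ≤ r)
    (hL : (lineAdj E).IsHermitian)
    (hL' : (lineAdj (powerEdges k s r E)).IsHermitian) :
    lineAdj (powerEdges k s r E) = (s : ℝ) • lineAdj E ∧
    (∀ lam : ℝ, (lineAdj (powerEdges k s r E)).charpoly.eval lam =
      (s : ℝ) ^ m * (lineAdj E).charpoly.eval (lam / s)) ∧
    (∑ i, |hL'.eigenvalues i|) = s * ∑ i, |hL.eigenvalues i| := by
  have hsR : (s : ℝ) ≠ 0 := by positivity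
  -- Part 1: matrix equality
  have hmat : lineAdj (powerEdges k s r E) = (s : ℝ) • lineAdj E := by
    funext e f
    by_cases hef : e = f
    · subst hef; simp [lineAdj]
    · have hinter : (powerEdges k s r E e) ∩ (powerEdges k s r E f)
          = ((E e ∩ E f) ×ˢ (univ : Finset (Fin s))).map (Function.Embedding.inl) := by
        ext x
        cases x with
        | inl p => simp [powerEdges, Function.Embedding.inl_apply]
        | inr p =>
            simp only [powerEdges, Finset.mem_inter, Finset.mem_union, Finset.mem_map,
              Finset.mem_product, Finset.mem_singleton, Finset.mem_univ]
            constructor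
            · rintro ⟨h1, h2⟩
              exfalso
              apply hef
              rcases h1 with ⟨a, _, ha⟩ | ⟨a, ha1, ha2⟩
              · exact absurd ha (by simp [Function.Embedding.inl])
              rcases h2 with ⟨b, _, hb⟩ | ⟨b, hb1, hb2⟩
              · exact absurd hb (by simp [Function.Embedding.inl])
              have hae : a.1 = e := ha1.1
              have hbf : b.1 = f := hb1.1
              have : a = b := by
                apply Sum.inr.inj
                rw [show (Sum.inr a : (Fin n × Fin s) ⊕ (Fin m × Fin (r - k * s))) =
                  Function.Embedding.inr a from rfl, ha2,
                  show (Sum.inr b : (Fin n × Fin s) ⊕ (Fin m × Fin (r - k * s))) =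
                  Function.Embedding.inr b from rfl, hb2]
              rw [← hae, this, hbf]
            · rintro ⟨a, ha, hax⟩
              exact absurd hax (by simp [Function.Embedding.inl])
      simp only [lineAdj, if_neg hef, Matrix.smul_apply, smul_eq_mul]
      rw [hinter, Finset.card_map, Finset.card_product, Finset.card_univ, Fintype.card_fin]
      push_cast
      ring
  refine ⟨hmat, ?_, ?_⟩
  · -- Part 2: characteristic polynomial
    intro lam
    rw [eval_charpoly_aux, eval_charpoly_aux, hmat]
    have h2 : lam • (1 : Matrix (Fin m) (Fin m) ℝ) - (s : ℝ) • lineAdj E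
        = (s : ℝ) • ((lam / s) • (1 : Matrix (Fin m) (Fin m) ℝ) - lineAdj E) := by
      rw [smul_sub, smul_smul, mul_div_cancel₀ _ hsR]
    rw [h2, Matrix.det_smul, Fintype.card_fin]
  · -- Part 3: energy
    have hmult := eigenvalues_multiset_eq hL' hL (s : ℝ) hsR hmat
    have hsum : ∀ (f : Fin m → ℝ), ∑ i, |f i| = ((univ.val.map f).map (fun x => |x|)).sum := by
      intro f
      rw [Multiset.map_map]
      rfl
    rw [hsum hL'.eigenvalues, hmult, ← hsum]
    rw [Finset.mul_sum]
    apply Finset.sum_congr rfl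
    intro i _
    rw [abs_mul, abs_of_nonneg (by positivity : (0:ℝ) ≤ (s:ℝ))]
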